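/- Let k be a field of characteristic zero, R = k[x,y], d(x) = y^m, d(y) = 1 - x^α y, m ≥ 2, α ≥ 1. Suppose r = Σ_{i=0}^{l} f_i(x) y^i with l > 0, f_l ≠ 0, and d(r) = a x + b. Let j_0 be the greatest positive integer with l - m(j_0 - 1) > 0. Then l = m j_0, and for all 1 ≤ j ≤ j_0: deg_x f_{l - m j}(x) = j(α+1), while deg_x f_{l - m j + s}(x) ≤ (j-1)(α+1) for all 1 ≤ s ≤ m - 1. -/

import Mathlib

open Polynomial

section Helpers
variable {k : Type*} [Field k]


lemma dC_eq (m : ℕ)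
    (d : Derivation k (Polynomial (Polynomial k)) (Polynomial (Polynomial k)))
    (hdx : d (C X) = X ^ m) (p : Polynomial k) :
    d (C p) = C (derivative p) * X ^ m := by
  induction p using Polynomial.induction_on with
  | C a =>
      have : (C (Polynomial.C a) : Polynomial (Polynomial k)) = algebraMap k _ a := rfl
      rw [this, Derivation.map_algebraMap]; simp
  | add p q hp hq => simp [hp, hq, add_mul]
  | monomial n a _ =>
      have h1 : (C (Polynomial.C a * X ^ (n+1)) : Polynomial (Polynomial k))
          = C (Polynomial.C a) * (C X) ^ (n+1) := by simp [map_mul, map_pow]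
      rw [h1, Derivation.leibniz, Derivation.leibniz_pow, hdx]
      have h2 : d (C (Polynomial.C a)) = 0 := by
        have : (C (Polynomial.C a) : Polynomial (Polynomial k)) = algebraMap k _ a := rfl
        rw [this, Derivation.map_algebraMap]
      rw [h2]
      simp [smul_smul, map_mul, map_pow, smul_eq_mul, nsmul_eq_mul]
      ring

lemma dterm (m α : ℕ)
    (d : Derivation k (Polynomial (Polynomial k)) (Polynomial (Polynomial k)))
    (hdx : d (C X) = X ^ m) (hdy : d X = 1 - (C X) ^ α * X) (p : Polynomial k) (i : ℕ) :
    d (C p * X ^ i) = C (derivative p) * X ^ (m + i)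
      + C (i • p) * X ^ (i - 1) - C (X ^ α * (i • p)) * X ^ i := by
  rw [Derivation.leibniz, dC_eq m d hdx p, Derivation.leibniz_pow, hdy]
  cases i with
  | zero => simp
  | succ j =>
      simp only [smul_eq_mul, nsmul_eq_mul, map_mul, map_natCast, map_pow,
        Nat.add_sub_cancel, Nat.cast_add, Nat.cast_one, map_add, map_one]
      ring


lemma hS1 (m l : ℕ) (f : ℤ → Polynomial k)
    (hf0 : ∀ j : ℤ, ((l : ℤ) < j ∨ j < 0) → f j = 0) (n : ℕ) :
    ∑ i ∈ Finset.range (l+1), (f i).derivative * (if n = m + i then 1 else 0)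
      = derivative (f ((n:ℤ) - m)) := by
  by_cases h : m ≤ n ∧ n - m ≤ l
  · rw [Finset.sum_eq_single (n - m)]
    · have : ((n - m : ℕ) : ℤ) = (n:ℤ) - m := by omega
      rw [this, if_pos (by omega), mul_one]
    · intro i hi hne
      rw [if_neg (by simp at hi; omega), mul_zero]
    · intro hmem
      simp at hmem; omega
  · have : f ((n:ℤ) - m) = 0 := hf0 _ (by omega)
    rw [this, map_zero]
    apply Finset.sum_eq_zero
    intro i hi
    rw [if_neg (by simp at hi; omega), mul_zero]

lemma hS2 (l : ℕ) (f : ℤ → Polynomial k)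
    (hf0 : ∀ j : ℤ, ((l : ℤ) < j ∨ j < 0) → f j = 0) (n : ℕ) :
    ∑ i ∈ Finset.range (l+1), ((i • f i) * (if n = i - 1 then 1 else 0))
      = (n+1) • f ((n:ℤ) + 1) := by
  by_cases h : n + 1 ≤ l
  · rw [Finset.sum_eq_single (n + 1)]
    · rw [if_pos (by omega), mul_one]
      norm_num
    · intro i hi hne
      rcases Nat.eq_zero_or_pos i with h0 | h0
      · simp [h0]
      · rw [if_neg (by simp at hi; omega), mul_zero]
    · intro hmem; simp at hmem; omega
  · have : f ((n:ℤ) + 1) = 0 := hf0 _ (by omega)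
    rw [this, smul_zero]
    apply Finset.sum_eq_zero
    intro i hi
    rcases Nat.eq_zero_or_pos i with h0 | h0
    · simp [h0]
    · rw [if_neg (by simp at hi; omega), mul_zero]

lemma hS3 (α l : ℕ) (f : ℤ → Polynomial k)
    (hf0 : ∀ j : ℤ, ((l : ℤ) < j ∨ j < 0) → f j = 0) (n : ℕ) :
    ∑ i ∈ Finset.range (l+1), ((X^α * (i • f i)) * (if n = i then 1 else 0))
      = X^α * (n • f (n:ℤ)) := by
  by_cases h : n ≤ l
  · rw [Finset.sum_eq_single n]
    · rw [if_pos rfl, mul_one]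
    · intro i hi hne; rw [if_neg (fun hh => hne hh.symm), mul_zero]
    · intro hmem; simp at hmem; omega
  · have : f (n:ℤ) = 0 := hf0 _ (by omega)
    rw [this, smul_zero, mul_zero]
    apply Finset.sum_eq_zero
    intro i hi
    rw [if_neg (by simp at hi; omega), mul_zero]

lemma key (m α : ℕ)
    (d : Derivation k (Polynomial (Polynomial k)) (Polynomial (Polynomial k)))
    (hdx : d (C X) = X ^ m) (hdy : d X = 1 - (C X) ^ α * X)
    (l : ℕ) (f : ℤ → Polynomial k)
    (hf0 : ∀ j : ℤ, ((l : ℤ) < j ∨ j < 0) → f j = 0)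
    (r : Polynomial (Polynomial k))
    (hrsum : r = ∑ i ∈ Finset.range (l + 1), C (f i) * X ^ i)
    (a b : k) (hr : d r = C (Polynomial.C a) * C X + C (Polynomial.C b))
    (n : ℕ) (hn : 1 ≤ n) :
    derivative (f ((n:ℤ) - m)) + (n+1) • f ((n:ℤ) + 1) = X^α * (n • f (n:ℤ)) := by
  have hcoeff : (d r).coeff n = derivative (f ((n:ℤ) - m)) + (n+1) • f ((n:ℤ) + 1)
      - X^α * (n • f (n:ℤ)) := by
    rw [hrsum, map_sum, finset_sum_coeff]
    have : ∀ i ∈ Finset.range (l+1),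
        (d (C (f i) * X ^ i)).coeff n
          = (f i).derivative * (if n = m + i then 1 else 0)
            + (i • f i) * (if n = i - 1 then 1 else 0)
            - (X^α * (i • f i)) * (if n = i then 1 else 0) := by
      intro i _
      rw [dterm m α d hdx hdy (f i) i]
      simp only [coeff_add, coeff_sub, coeff_C_mul, coeff_X_pow]
    rw [Finset.sum_congr rfl this, Finset.sum_sub_distrib, Finset.sum_add_distrib,
      hS1 m l f hf0 n, hS2 l f hf0 n, hS3 α l f hf0 n]
  have hz : (d r).coeff n = 0 := by
    rw [hr]
    have h2 : C (Polynomial.C a) * C X + C (Polynomial.C b)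
        = (C (Polynomial.C a * X + Polynomial.C b) : Polynomial (Polynomial k)) := by
      simp [map_add, map_mul]
    rw [h2, coeff_C, if_neg (by omega)]
  rw [hz] at hcoeff
  exact sub_eq_zero.mp hcoeff.symm

variable [CharZero k]

lemma deg_nsmul (n : ℕ) (hn : n ≠ 0) (p : Polynomial k) :
    (n • p).degree = p.degree := by
  rw [nsmul_eq_mul, ← C_eq_natCast, degree_mul, degree_C (by exact_mod_cast hn), zero_add]

lemma deg_nsmul_le (n : ℕ) (p : Polynomial k) : (n • p).degree ≤ p.degree := by
  rcases Nat.eq_zero_or_pos n with rfl | h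
  · simp
  · exact le_of_eq (deg_nsmul n (by omega) p)

lemma deg_of_deriv_eq {g : Polynomial k} {K : ℕ}
    (h : (derivative g).degree = (K : WithBot ℕ)) :
    g.degree = ((K + 1 : ℕ) : WithBot ℕ) := by
  have hd0 : derivative g ≠ 0 := fun hh => by simp [hh, degree_zero] at h
  have hnd : g.natDegree ≠ 0 := by
    intro h0
    rw [eq_C_of_natDegree_eq_zero h0] at hd0
    simp at hd0
  rw [degree_derivative_eq g (by omega)] at h
  have h2 : g.natDegree - 1 = K := by exact_mod_cast h
  have hg0 : g ≠ 0 := fun hh => by simp [hh] at hnd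
  rw [degree_eq_natDegree hg0]
  exact_mod_cast congrArg (Nat.cast : ℕ → WithBot ℕ) (by omega : g.natDegree = K + 1)

lemma deg_of_deriv_lt {g : Polynomial k} {K : ℕ}
    (h : (derivative g).degree < (K : WithBot ℕ)) :
    g.degree ≤ (K : WithBot ℕ) := by
  rcases Nat.eq_zero_or_pos g.natDegree with h0 | h0
  · calc g.degree ≤ (g.natDegree : WithBot ℕ) := degree_le_natDegree
      _ = ((0:ℕ) : WithBot ℕ) := by rw [h0]
      _ ≤ (K : WithBot ℕ) := by exact_mod_cast Nat.zero_le K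
  · rw [degree_derivative_eq g h0] at h
    have h2 : g.natDegree - 1 < K := by exact_mod_cast h
    rw [degree_eq_natDegree (fun hh => by simp [hh] at h0)]
    exact_mod_cast (by omega : g.natDegree ≤ K)

lemma natid1 (j α : ℕ) (h : 1 ≤ j) : j * (α + 1) = α + (j - 1) * (α + 1) + 1 := by
  obtain ⟨q, rfl⟩ := Nat.exists_eq_add_of_le h
  have e : 1 + q - 1 = q := by omega
  rw [e]; ring

lemma natid2 (j α : ℕ) (h : 2 ≤ j) : α + (j - 2) * (α + 1) < (j - 1) * (α + 1) := by
  obtain ⟨q, rfl⟩ := Nat.exists_eq_add_of_le h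
  have e : (2 + q - 1) * (α + 1) = (2 + q - 2) * (α + 1) + (α + 1) := by
    have : 2 + q - 1 = (2 + q - 2) + 1 := by omega
    rw [this]; ring
  linarith

lemma natid3 (j α : ℕ) (hα : 1 ≤ α) (h : 1 ≤ j) :
    (j - 1 - 1) * (α + 1) < α + (j - 1) * (α + 1) := by
  have e : (j - 1 - 1) * (α + 1) ≤ (j - 1) * (α + 1) :=
    Nat.mul_le_mul_right _ (by omega)
  linarith

end Helpers

theorem stmt11 (k : Type*) [Field k] [CharZero k] (m α : ℕ) (hm : 2 ≤ m) (hα : 1 ≤ α)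
    (d : Derivation k (Polynomial (Polynomial k)) (Polynomial (Polynomial k)))
    (hdx : d (C X) = X ^ m)
    (hdy : d X = 1 - (C X) ^ α * X)
    (l : ℕ) (hl : 0 < l) (f : ℤ → Polynomial k)
    (hf0 : ∀ j : ℤ, ((l : ℤ) < j ∨ j < 0) → f j = 0)
    (hfl : f l ≠ 0)
    (r : Polynomial (Polynomial k))
    (hrsum : r = ∑ i ∈ Finset.range (l + 1), C (f i) * X ^ i)
    (a b : k) (hr : d r = C (Polynomial.C a) * C X + C (Polynomial.C b))
    (j₀ : ℕ) (hj₀pos : 0 < j₀) (hj₀ : m * (j₀ - 1) < l)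
    (hj₀max : ∀ j : ℕ, 0 < j → m * (j - 1) < l → j ≤ j₀) :
    l = m * j₀ ∧
    ∀ j : ℕ, 1 ≤ j → j ≤ j₀ →
      (f ((l : ℤ) - m * j)).degree = ((j * (α + 1) : ℕ) : WithBot ℕ) ∧
      ∀ s : ℕ, 1 ≤ s → s ≤ m - 1 →
        (f ((l : ℤ) - m * j + s)).degree ≤ (((j - 1) * (α + 1) : ℕ) : WithBot ℕ) := by
  have hkey := key m α d hdx hdy l f hf0 r hrsum a b hr
  have main : ∀ j : ℕ, j ≤ j₀ →
      (f ((l : ℤ) - m * j)).degree = ((j * (α + 1) : ℕ) : WithBot ℕ) ∧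
      ∀ s : ℕ, 1 ≤ s → s ≤ m - 1 →
        (f ((l : ℤ) - m * j + s)).degree ≤ (((j - 1) * (α + 1) : ℕ) : WithBot ℕ) := by
    intro j
    induction j using Nat.strong_induction_on with
    | _ j ih =>
      intro hjle
      rcases Nat.eq_zero_or_pos j with rfl | hj1
      · constructor
        · have h := hkey (l + m) (by omega)
          have e1 : ((l+m : ℕ):ℤ) - (m:ℤ) = (l:ℤ) := by push_cast; ring
          have e2 : f (((l+m:ℕ):ℤ) + 1) = 0 := hf0 _ (by left; push_cast; omega)
          have e3 : f ((l+m:ℕ):ℤ) = 0 := hf0 _ (by left; push_cast; omega)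
          rw [e1, e2, e3] at h
          simp only [smul_zero, add_zero, mul_zero] at h
          have h0 : (f (l:ℤ)).natDegree = 0 := natDegree_eq_zero_of_derivative_eq_zero h
          have e4 : ((l:ℤ) - (m:ℤ) * ((0:ℕ):ℤ)) = (l:ℤ) := by push_cast; ring
          rw [e4, degree_eq_natDegree hfl, h0]
          simp
        · intro s hs1 hs2
          have e5 : f ((l:ℤ) - (m:ℤ) * ((0:ℕ):ℤ) + s) = 0 := hf0 _ (by left; push_cast; omega)
          rw [e5, degree_zero]
          exact bot_le
      · have hml : m * (j-1) < l :=
          lt_of_le_of_lt (Nat.mul_le_mul_left m (by omega : j - 1 ≤ j₀ - 1)) hj₀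
        obtain ⟨N, hNz, hN1⟩ : ∃ N : ℕ, ((N:ℤ) = (l:ℤ) - (m:ℤ) * ((j-1 : ℕ):ℤ)) ∧ 1 ≤ N :=
          ⟨l - m * (j-1), by push_cast [Nat.cast_sub hml.le]; ring, Nat.sub_pos_of_lt hml⟩
        have cj1 : ((j-1:ℕ):ℤ) = (j:ℤ) - 1 := by omega
        have hB : ∀ t : ℕ, 1 ≤ t → t ≤ m →
            (f ((l:ℤ) - (m:ℤ) * ((j-1:ℕ):ℤ) + t)).degree
              ≤ (((j-1-1) * (α+1) : ℕ) : WithBot ℕ) := by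
          intro t ht1 htm
          rcases Nat.lt_or_ge j 2 with hj2 | hj2
          · have hj1' : j = 1 := by omega
            have hz : f ((l:ℤ) - (m:ℤ) * ((j-1:ℕ):ℤ) + t) = 0 := by
              apply hf0; left; rw [hj1']; omega
            rw [hz, degree_zero]; exact bot_le
          · by_cases htm1 : t ≤ m - 1
            · exact (ih (j-1) (by omega) (by omega)).2 t ht1 htm1
            · have htm' : t = m := by omega
              have cj2 : ((j-2:ℕ):ℤ) = (j:ℤ) - 2 := by omega
              have hidx : (l:ℤ) - (m:ℤ) * ((j-1:ℕ):ℤ) + (t:ℤ) = (l:ℤ) - (m:ℤ) * ((j-2:ℕ):ℤ) := by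
                rw [htm', cj1, cj2]; push_cast; ring
              rw [hidx]
              have h2 := (ih (j-2) (by omega) (by omega)).1
              have e6 : (j-2) * (α+1) = (j-1-1) * (α+1) := by rw [show j-1-1 = j-2 by omega]
              rw [← e6]
              exact le_of_eq h2
        have hDN : (f (N:ℤ)).degree = (((j-1) * (α+1) : ℕ) : WithBot ℕ) := by
          rw [hNz]
          exact (ih (j-1) (by omega) (by omega)).1
        have hRHS : (X^α * (N • f (N:ℤ)) : Polynomial k).degree
            = ((α + (j-1)*(α+1) : ℕ) : WithBot ℕ) := by
          rw [degree_mul, deg_nsmul N (by omega) _, degree_X_pow, hDN, ← Nat.cast_add]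
        have hsec : ((N+1) • f ((N:ℤ)+1)).degree < ((α + (j-1)*(α+1) : ℕ) : WithBot ℕ) := by
          apply lt_of_le_of_lt (deg_nsmul_le _ _)
          have h1 := hB 1 le_rfl (by omega)
          have hidx : (l:ℤ) - (m:ℤ) * ((j-1:ℕ):ℤ) + ((1:ℕ):ℤ) = (N:ℤ) + 1 := by
            rw [hNz]; push_cast; ring
          rw [hidx] at h1
          have hnat : (j-1-1)*(α+1) < α + (j-1)*(α+1) := natid3 j α hα hj1
          exact lt_of_le_of_lt h1 (by exact_mod_cast hnat)
        have hidx1 : (N:ℤ) - (m:ℤ) = (l:ℤ) - (m:ℤ) * (j:ℤ) := by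
          rw [hNz, cj1]; ring
        have heq1 : derivative (f ((l:ℤ) - (m:ℤ) * (j:ℤ)))
            = X^α * (N • f (N:ℤ)) - (N+1) • f ((N:ℤ)+1) := by
          rw [eq_sub_iff_add_eq, ← hidx1]
          exact hkey N hN1
        have hderiv : (derivative (f ((l:ℤ) - (m:ℤ) * (j:ℤ)))).degree
            = ((α + (j-1)*(α+1) : ℕ) : WithBot ℕ) := by
          rw [heq1, degree_sub_eq_left_of_degree_lt (by rw [hRHS]; exact hsec), hRHS]
        have hpart1 : (f ((l:ℤ) - (m:ℤ) * (j:ℤ))).degree = ((j * (α+1) : ℕ) : WithBot ℕ) := by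
          rw [deg_of_deriv_eq hderiv]
          congr 1
          exact (natid1 j α hj1).symm
        refine ⟨hpart1, ?_⟩
        intro s hs1 hs2
        have hk2 := hkey (N + s) (by omega)
        have hidx2 : ((N+s:ℕ):ℤ) - (m:ℤ) = (l:ℤ) - (m:ℤ) * (j:ℤ) + (s:ℤ) := by
          push_cast [hNz, cj1]; ring
        have hidx3 : ((N+s:ℕ):ℤ) = (l:ℤ) - (m:ℤ) * ((j-1:ℕ):ℤ) + (s:ℤ) := by
          push_cast [hNz]; ring
        have hidx4 : ((N+s:ℕ):ℤ) + 1 = (l:ℤ) - (m:ℤ) * ((j-1:ℕ):ℤ) + ((s+1:ℕ):ℤ) := by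
          push_cast [hNz]; ring
        have heq2 : derivative (f ((l:ℤ) - (m:ℤ) * (j:ℤ) + (s:ℤ)))
            = X^α * ((N+s) • f ((N+s:ℕ):ℤ)) - (N+s+1) • f (((N+s:ℕ):ℤ)+1) := by
          rw [eq_sub_iff_add_eq, ← hidx2]
          exact hk2
        apply deg_of_deriv_lt
        rw [heq2]
        apply lt_of_le_of_lt (degree_sub_le _ _)
        apply max_lt
        · rcases Nat.lt_or_ge j 2 with hj2 | hj2
          · have hj1' : j = 1 := by omega
            have hz : f ((N+s:ℕ):ℤ) = 0 := by
              apply hf0; left; rw [hidx3, hj1']; omega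
            rw [hz, smul_zero, mul_zero, degree_zero]
            exact WithBot.bot_lt_coe _
          · have h1 : (f ((N+s:ℕ):ℤ)).degree ≤ (((j-1-1)*(α+1) : ℕ) : WithBot ℕ) := by
              rw [hidx3]; exact hB s hs1 (by omega)
            have hnat : α + (j-1-1)*(α+1) < (j-1)*(α+1) := by
              have e : j-1-1 = j-2 := by omega
              rw [e]; exact natid2 j α hj2
            calc (X^α * ((N+s) • f ((N+s:ℕ):ℤ))).degree
                ≤ (X^α : Polynomial k).degree + (((j-1-1)*(α+1) : ℕ) : WithBot ℕ) := by
                  rw [degree_mul]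
                  exact add_le_add le_rfl (le_trans (deg_nsmul_le _ _) h1)
              _ = ((α + (j-1-1)*(α+1) : ℕ) : WithBot ℕ) := by
                  rw [degree_X_pow, ← Nat.cast_add]
              _ < (((j-1) * (α+1) : ℕ) : WithBot ℕ) := by exact_mod_cast hnat
        · rcases Nat.lt_or_ge j 2 with hj2 | hj2
          · have hj1' : j = 1 := by omega
            have hz : f (((N+s:ℕ):ℤ)+1) = 0 := by
              apply hf0; left; rw [hidx4, hj1']; omega
            rw [hz, smul_zero, degree_zero]
            exact WithBot.bot_lt_coe _
          · have h1 : (f (((N+s:ℕ):ℤ)+1)).degree ≤ (((j-1-1)*(α+1) : ℕ) : WithBot ℕ) := by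
              rw [hidx4]; exact hB (s+1) (by omega) (by omega)
            have hnat : (j-1-1)*(α+1) < (j-1)*(α+1) := by
              have e : j-1-1 = j-2 := by omega
              rw [e]
              exact lt_of_le_of_lt (Nat.le_add_left _ α) (natid2 j α hj2)
            exact lt_of_le_of_lt (le_trans (deg_nsmul_le _ _) h1) (by exact_mod_cast hnat)
  have hmain := main j₀ le_rfl
  have hne : f ((l:ℤ) - (m:ℤ) * (j₀:ℤ)) ≠ 0 := by
    intro hz
    have h1 := hmain.1
    rw [hz, degree_zero, Nat.cast_withBot] at h1
    exact WithBot.bot_ne_coe h1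
  have hge : (m:ℤ) * (j₀:ℤ) ≤ (l:ℤ) := by
    by_contra hcon
    push_neg at hcon
    exact hne (hf0 _ (Or.inr (by linarith)))
  have hge' : m * j₀ ≤ l := by exact_mod_cast hge
  have hle : l ≤ m * j₀ := by
    by_contra hcon
    push_neg at hcon
    have := hj₀max (j₀ + 1) (by omega) (by simpa using hcon)
    omega
  exact ⟨le_antisymm hle hge', fun j h1 h2 => (main j h2)⟩
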